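/- Limit of the nonlinear regression adjustment under misspecification: Let (Ω, P) be a probability space (for each n), and let θ_n, η_{y,n}, η_{z,n} be random variables with values in ℝ and ℝ^{k_η} respectively such that θ_n → θ* in probability, η_{y,n} → b₀ in probability, and η_{z,n} → b(θ*) in probability, where b₀ ≠ b(θ*) in general. Let m̂_n be random continuous functions from an open set U ⊆ ℝ^{k_η} containing b₀ and b(θ*) to ℝ, and let m* : U → ℝ be continuous, such that sup_{t ∈ K} |m̂_n(t) − m*(t)| → 0 in probability for some compact K ⊆ U containing neighborhoods of b₀ and of b(θ*). Then the nonlinearly adjusted draws θ̃_n := θ_n + m̂_n(η_{y,n}) − m̂_n(η_{z,n}) satisfy θ̃_n → θ* + m*(b₀) − m*(b(θ*)) in probability; in particular, whenever m*(b₀) ≠ m*(b(θ*)), the nonlinear regression adjustment concentrates on a value different from θ*. -/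

import Mathlib

open MeasureTheory Filter

/-- **Limit of the nonlinear regression adjustment under misspecification**: if the
accepted draws `θ_n` converge in probability to `θ*`, the observed and simulated
summaries converge in probability to `b₀` and `b(θ*)` respectively, and the estimated
regression functions `m̂_n` converge uniformly in probability on a compact set `K`
(containing neighborhoods of `b₀` and `b(θ*)`) to `m*`, then the adjusted draws
`θ̃_n = θ_n + m̂_n(η_{y,n}) − m̂_n(η_{z,n})` converge in probability to
`θ* + m*(b₀) − m*(b(θ*))`; in particular the latter differs from `θ*` whenever
`m*(b₀) ≠ m*(b(θ*))`. -/
theorem abc_nonlinear_regression_adjustment_limit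
    {kη : ℕ}
    {Ω : Type*} [MeasurableSpace Ω]
    (P : Measure Ω) [IsProbabilityMeasure P]
    (θn : ℕ → Ω → ℝ)
    (ηy ηz : ℕ → Ω → EuclideanSpace ℝ (Fin kη))
    (θstar : ℝ) (b₀ bθstar : EuclideanSpace ℝ (Fin kη))
    (hθn : TendstoInMeasure P θn atTop (fun _ => θstar))
    (hηy : TendstoInMeasure P ηy atTop (fun _ => b₀))
    (hηz : TendstoInMeasure P ηz atTop (fun _ => bθstar))
    (U : Set (EuclideanSpace ℝ (Fin kη))) (hU : IsOpen U)
    (hb₀U : b₀ ∈ U) (hbθstarU : bθstar ∈ U)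
    (mhat : ℕ → Ω → EuclideanSpace ℝ (Fin kη) → ℝ)
    (hmhat_cont : ∀ n ω, ContinuousOn (mhat n ω) U)
    (mstar : EuclideanSpace ℝ (Fin kη) → ℝ) (hmstar_cont : ContinuousOn mstar U)
    (K : Set (EuclideanSpace ℝ (Fin kη))) (hK_cpt : IsCompact K) (hKU : K ⊆ U)
    (hb₀K : b₀ ∈ interior K) (hbθstarK : bθstar ∈ interior K)
    (hunif : TendstoInMeasure P
      (fun n ω => ⨆ t : K, |mhat n ω t.1 - mstar t.1|) atTop (fun _ => 0)) :
    TendstoInMeasure P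
      (fun n ω => θn n ω + mhat n ω (ηy n ω) - mhat n ω (ηz n ω)) atTop
      (fun _ => θstar + mstar b₀ - mstar bθstar) ∧
    (mstar b₀ ≠ mstar bθstar → θstar + mstar b₀ - mstar bθstar ≠ θstar) := by
  haveI : Nonempty ↥K := ⟨⟨b₀, interior_subset hb₀K⟩⟩
  constructor
  · rw [tendstoInMeasure_iff_dist]
    intro ε hε
    have hmb₀ : ContinuousAt mstar b₀ := hmstar_cont.continuousAt (hU.mem_nhds hb₀U)
    have hmbθ : ContinuousAt mstar bθstar := hmstar_cont.continuousAt (hU.mem_nhds hbθstarU)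
    obtain ⟨δ₁, hδ₁pos, hδ₁⟩ := Metric.continuousAt_iff.mp hmb₀ (ε / 6) (by positivity)
    obtain ⟨δ₂, hδ₂pos, hδ₂⟩ := Metric.continuousAt_iff.mp hmbθ (ε / 6) (by positivity)
    obtain ⟨δ₃, hδ₃pos, hδ₃⟩ :=
      Metric.mem_nhds_iff.mp (mem_interior_iff_mem_nhds.mp hb₀K)
    obtain ⟨δ₄, hδ₄pos, hδ₄⟩ :=
      Metric.mem_nhds_iff.mp (mem_interior_iff_mem_nhds.mp hbθstarK)
    set δ := min (min δ₁ δ₂) (min δ₃ δ₄) with hδdef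
    have hδpos : 0 < δ := by
      simp only [hδdef, lt_min_iff]
      exact ⟨⟨hδ₁pos, hδ₂pos⟩, hδ₃pos, hδ₄pos⟩
    set S : ℕ → Ω → ℝ := fun n ω => ⨆ t : K, |mhat n ω t.1 - mstar t.1| with hSdef
    have hsubset : ∀ n,
        {ω | ε ≤ dist (θn n ω + mhat n ω (ηy n ω) - mhat n ω (ηz n ω))
          (θstar + mstar b₀ - mstar bθstar)} ⊆
        {ω | ε / 3 ≤ dist (θn n ω) θstar} ∪ {ω | δ ≤ dist (ηy n ω) b₀} ∪
          {ω | δ ≤ dist (ηz n ω) bθstar} ∪ {ω | ε / 6 ≤ dist (S n ω) (0 : ℝ)} := by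
      intro n ω hω
      by_contra hcon
      simp only [Set.mem_union, Set.mem_setOf_eq, not_or, not_le] at hcon
      obtain ⟨⟨⟨h1, h2⟩, h3⟩, h4⟩ := hcon
      simp only [Set.mem_setOf_eq, Real.dist_eq] at hω
      -- membership of the summaries in K
      have hyK : ηy n ω ∈ K := by
        have : ηy n ω ∈ Metric.ball b₀ δ₃ :=
          Metric.mem_ball.mpr (lt_of_lt_of_le h2 (le_trans (min_le_right _ _) (min_le_left _ _)))
        exact hδ₃ this
      have hzK : ηz n ω ∈ K := by
        have : ηz n ω ∈ Metric.ball bθstar δ₄ :=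
          Metric.mem_ball.mpr (lt_of_lt_of_le h3 (le_trans (min_le_right _ _) (min_le_right _ _)))
        exact hδ₄ this
      -- the sup bound
      obtain ⟨C, hC⟩ := hK_cpt.exists_bound_of_continuousOn
        (((hmhat_cont n ω).sub hmstar_cont).mono hKU)
      have hbdd : BddAbove (Set.range fun t : K => |mhat n ω t.1 - mstar t.1|) := by
        refine ⟨C, ?_⟩
        rintro y ⟨t, rfl⟩
        have := hC t.1 t.2
        rwa [Real.norm_eq_abs] at this
      have hSy : |mhat n ω (ηy n ω) - mstar (ηy n ω)| ≤ S n ω :=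
        le_ciSup hbdd ⟨ηy n ω, hyK⟩
      have hSz : |mhat n ω (ηz n ω) - mstar (ηz n ω)| ≤ S n ω :=
        le_ciSup hbdd ⟨ηz n ω, hzK⟩
      have hSsmall : S n ω < ε / 6 := by
        have : S n ω ≤ |S n ω| := le_abs_self _
        have h4' : |S n ω| < ε / 6 := by
          have : dist (S n ω) (0 : ℝ) = |S n ω| := by rw [Real.dist_eq, sub_zero]
          rwa [this] at h4
        linarith
      -- continuity bounds
      have hmy : |mstar (ηy n ω) - mstar b₀| < ε / 6 := by
        have : dist (ηy n ω) b₀ < δ₁ :=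
          lt_of_lt_of_le h2 (le_trans (min_le_left _ _) (min_le_left _ _))
        have := hδ₁ this
        rwa [Real.dist_eq] at this
      have hmz : |mstar (ηz n ω) - mstar bθstar| < ε / 6 := by
        have : dist (ηz n ω) bθstar < δ₂ :=
          lt_of_lt_of_le h3 (le_trans (min_le_left _ _) (min_le_right _ _))
        have := hδ₂ this
        rwa [Real.dist_eq] at this
      -- combine
      have hB : |mhat n ω (ηy n ω) - mstar b₀| < ε / 3 := by
        have : |mhat n ω (ηy n ω) - mstar b₀| ≤
            |mhat n ω (ηy n ω) - mstar (ηy n ω)| + |mstar (ηy n ω) - mstar b₀| := by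
          have := abs_add_le (mhat n ω (ηy n ω) - mstar (ηy n ω)) (mstar (ηy n ω) - mstar b₀)
          simpa using this
        linarith
      have hCz : |mhat n ω (ηz n ω) - mstar bθstar| < ε / 3 := by
        have : |mhat n ω (ηz n ω) - mstar bθstar| ≤
            |mhat n ω (ηz n ω) - mstar (ηz n ω)| + |mstar (ηz n ω) - mstar bθstar| := by
          have := abs_add_le (mhat n ω (ηz n ω) - mstar (ηz n ω)) (mstar (ηz n ω) - mstar bθstar)
          simpa using this
        linarith
      have h1' := abs_lt.mp h1
      have hB' := abs_lt.mp hB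
      have hC' := abs_lt.mp hCz
      have : |θn n ω + mhat n ω (ηy n ω) - mhat n ω (ηz n ω) -
          (θstar + mstar b₀ - mstar bθstar)| < ε :=
        abs_lt.mpr ⟨by linarith [h1'.1, hB'.1, hC'.2], by linarith [h1'.2, hB'.2, hC'.1]⟩
      linarith
    have htA := tendstoInMeasure_iff_dist.mp hθn (ε / 3) (by positivity)
    have htB := tendstoInMeasure_iff_dist.mp hηy δ hδpos
    have htC := tendstoInMeasure_iff_dist.mp hηz δ hδpos
    have htD := tendstoInMeasure_iff_dist.mp hunif (ε / 6) (by positivity)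
    have hsum : Tendsto (fun n =>
        P {ω | ε / 3 ≤ dist (θn n ω) θstar} + P {ω | δ ≤ dist (ηy n ω) b₀} +
          P {ω | δ ≤ dist (ηz n ω) bθstar} + P {ω | ε / 6 ≤ dist (S n ω) (0 : ℝ)})
        atTop (nhds 0) := by
      have := ((htA.add htB).add htC).add htD
      simpa using this
    refine tendsto_of_tendsto_of_tendsto_of_le_of_le tendsto_const_nhds hsum
      (fun n => zero_le) ?_
    intro n
    refine (measure_mono (hsubset n)).trans ?_
    refine le_trans (measure_union_le _ _) (add_le_add ?_ le_rfl)
    refine le_trans (measure_union_le _ _) (add_le_add ?_ le_rfl)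
    exact measure_union_le _ _
  · intro h heq
    apply h
    linarith
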